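/- Let (r_j)_{j≥n} be independent exponential random variables where r_j has rate h(j) > 0, with h nondecreasing in j and ∑_{j≥n} 1/h(j) < ∞; set R = ∑_{j≥n} r_j and Z = ∑_{j≥n} 1/h(j)², and assume 1/√Z ≤ h(n)/2. Then for every t > 0, P(R − E[R] > t√Z) ≤ e^{2−t} and P(R − E[R] < −t√Z) ≤ e^{2−t}. -/

import Mathlib

open MeasureTheory ProbabilityTheory
open Real Set Filter Topology
open scoped ENNReal NNReal

section AuxLemmas

lemma integral_exp_neg_mul_Ioi' {c : ℝ} (hc : 0 < c) :
    ∫ x in Ioi (0:ℝ), Real.exp (-(c * x)) = 1 / c := by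
  have := integral_rpow_mul_exp_neg_mul_Ioi (a := 1) (r := c) zero_lt_one hc
  simp only [sub_self, Real.rpow_zero, one_mul, Real.rpow_one, Real.Gamma_one, mul_one] at this
  exact this

lemma lintegral_ofReal_expMeasure {l : ℝ} (hl : 0 < l) {f : ℝ → ℝ} (hf : Measurable f)
    (hf0 : ∀ x, 0 ≤ x → 0 ≤ f x)
    (hint : IntegrableOn (fun x => l * (f x * Real.exp (-(l * x)))) (Ioi (0:ℝ))) :
    ∫⁻ x, ENNReal.ofReal (f x) ∂(expMeasure l)
      = ENNReal.ofReal (∫ x in Ioi (0:ℝ), l * (f x * Real.exp (-(l * x)))) := by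
  have hmg : Measurable (gammaPDF 1 l) := (measurable_gammaPDFReal 1 l).ennreal_ofReal
  rw [expMeasure, gammaMeasure, lintegral_withDensity_eq_lintegral_mul _ hmg
    (by exact hf.ennreal_ofReal)]
  have h0 : ∀ᵐ x : ℝ, x ≠ 0 := by
    rw [ae_iff]
    simpa using Real.volume_singleton (x := 0)
  have hpt : ∀ᵐ x : ℝ, (gammaPDF 1 l * fun x => ENNReal.ofReal (f x)) x
      = Set.indicator (Ioi (0:ℝ))
          (fun x => ENNReal.ofReal (l * (f x * Real.exp (-(l * x))))) x := by
    filter_upwards [h0] with x hx0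
    simp only [Pi.mul_apply]
    rcases lt_or_gt_of_ne hx0 with hx | hx
    · rw [gammaPDF_of_neg hx, Set.indicator_of_notMem (by simpa using hx.le), zero_mul]
    · rw [gammaPDF_of_nonneg hx.le, Set.indicator_of_mem (show x ∈ Ioi 0 from hx),
        ← ENNReal.ofReal_mul (by positivity)]
      congr 1
      rw [show ((1:ℝ) - 1) = 0 by norm_num, Real.rpow_zero, Real.rpow_one, Real.Gamma_one]
      ring
  rw [lintegral_congr_ae hpt, lintegral_indicator measurableSet_Ioi,
    ← ofReal_integral_eq_lintegral_ofReal hint]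
  filter_upwards [ae_restrict_mem measurableSet_Ioi] with x hx
  have hx' : (0:ℝ) < x := hx
  have := hf0 x hx'.le
  positivity

lemma lintegral_exp_expMeasure {l u : ℝ} (hl : 0 < l) (hu : u < l) :
    (∫⁻ x, ENNReal.ofReal (Real.exp (u * x)) ∂(expMeasure l) = ENNReal.ofReal (l / (l - u)))
    ∧ Integrable (fun x => Real.exp (u * x)) (expMeasure l) := by
  have hlu : 0 < l - u := by linarith
  have h1 : (fun x : ℝ => l * (Real.exp (u * x) * Real.exp (-(l * x))))
      = (fun x => l * Real.exp (-((l - u) * x))) := by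
    funext x; rw [← Real.exp_add]; ring_nf
  have hint : IntegrableOn (fun x : ℝ => l * (Real.exp (u * x) * Real.exp (-(l * x)))) (Ioi 0) := by
    rw [h1]
    apply Integrable.const_mul
    have h2 := exp_neg_integrableOn_Ioi (a := 0) hlu
    simp only [← neg_mul]
    exact h2
  have hmeas : Measurable fun x : ℝ => Real.exp (u * x) := Real.measurable_exp.comp (measurable_const_mul u)
  have key := lintegral_ofReal_expMeasure hl hmeas (fun x _ => (Real.exp_pos _).le) hint
  have hval : ∫ x in Ioi (0:ℝ), l * (Real.exp (u * x) * Real.exp (-(l * x))) = l / (l - u) := by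
    rw [h1, integral_const_mul, integral_exp_neg_mul_Ioi' hlu]
    field_simp
  constructor
  · rw [key, hval]
  · refine ⟨hmeas.aestronglyMeasurable, ?_⟩
    rw [hasFiniteIntegral_iff_ofReal (ae_of_all _ fun x => (Real.exp_pos _).le), key, hval]
    exact ENNReal.ofReal_lt_top

lemma lintegral_id_expMeasure {l : ℝ} (hl : 0 < l) :
    ∫⁻ x, ENNReal.ofReal x ∂(expMeasure l) = ENNReal.ofReal (1 / l) := by
  have hint : IntegrableOn (fun x : ℝ => l * (x * Real.exp (-(l * x)))) (Ioi 0) := by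
    apply Integrable.const_mul
    have h2 := integrableOn_rpow_mul_exp_neg_mul_rpow (s := 1) (p := 1) (b := l)
      (by norm_num) zero_lt_one hl
    refine h2.congr_fun (fun x hx => ?_) measurableSet_Ioi
    simp only [Real.rpow_one, neg_mul]
  have key := lintegral_ofReal_expMeasure hl (measurable_id' : Measurable fun x : ℝ => x)
    (fun x hx => hx) hint
  have hval : ∫ x in Ioi (0:ℝ), l * (x * Real.exp (-(l * x))) = 1 / l := by
    rw [integral_const_mul]
    have := integral_rpow_mul_exp_neg_mul_Ioi (a := 2) (r := l) (by norm_num) hl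
    rw [show ∫ x in Ioi (0:ℝ), x * Real.exp (-(l * x))
        = ∫ x in Ioi (0:ℝ), x ^ ((2:ℝ) - 1) * Real.exp (-(l * x)) from
      setIntegral_congr_fun measurableSet_Ioi (fun x hx => by norm_num), this,
      Real.Gamma_two]
    rw [div_rpow (by norm_num) hl.le, one_rpow]
    have : (l:ℝ) ^ (2:ℝ) = l ^ (2:ℕ) := by
      rw [← Real.rpow_natCast]; norm_num
    rw [this]
    field_simp
  rw [key, hval]

lemma expMeasure_Iio_zero {l : ℝ} : expMeasure l (Iio 0) = 0 := by
  rw [expMeasure, gammaMeasure, withDensity_apply _ measurableSet_Iio]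
  simpa using lintegral_gammaPDF_of_nonpos (le_refl (0:ℝ)) (a := 1) (r := l)


lemma inv_one_sub_le_exp {x : ℝ} (h1 : -1 < x) (h2 : x ≤ 1/2) :
    1/(1-x) ≤ Real.exp (x + 2*x^2) := by
  have hx : 0 < 1 - x := by linarith
  have h3 : 1/(1-x) ≤ 1 + (x + 2*x^2) := by
    rw [div_le_iff₀ hx]
    nlinarith [sq_nonneg x]
  exact h3.trans (by linarith [Real.add_one_le_exp (x + 2*x^2)])

lemma rate_div_le_exp {l u : ℝ} (hl : 0 < l) (h1 : -l < u) (h2 : u ≤ l/2) :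
    l / (l - u) ≤ Real.exp (u * (1/l) + 2 * u^2 * (1/l)^2) := by
  have hx1 : -1 < u / l := by rw [neg_lt, ← neg_div, div_lt_one hl]; linarith
  have hx2 : u / l ≤ 1/2 := by rw [div_le_iff₀ hl]; linarith
  have := inv_one_sub_le_exp hx1 hx2
  have heq : l / (l - u) = 1 / (1 - u/l) := by
    rw [one_sub_div hl.ne', one_div_div]
  have harg : u / l + 2*(u/l)^2 = u * (1/l) + 2 * u^2 * (1/l)^2 := by ring
  rw [heq]
  rw [harg] at this
  exact this

end AuxLemmas

/-- `X` is exponentially distributed with rate `l` under `P`. -/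
def IsExponentialRV {Ω : Type*} [MeasurableSpace Ω] (P : Measure Ω) (X : Ω → ℝ) (l : ℝ) : Prop :=
  Measure.map X P = expMeasure l

/-- Let `(r j)_{j ≥ n}` be independent exponential random variables with
nondecreasing rates `h j > 0` and `∑_{j≥n} 1/h j < ∞`; set `R = ∑_{j≥n} r j` and
`Z = ∑_{j≥n} 1/h(j)²`, and assume `1/√Z ≤ h n / 2`.  Then for every `t > 0`,
`P(R − E[R] > t√Z) ≤ e^{2−t}` and `P(R − E[R] < −t√Z) ≤ e^{2−t}`. -/
theorem exponential_tail_sum_concentration {Ω : Type*} [MeasurableSpace Ω] (P : Measure Ω)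
    [IsProbabilityMeasure P] (n : ℕ) (h : ℕ → ℝ) (hh : ∀ j, n ≤ j → 0 < h j)
    (hmono : ∀ j k, n ≤ j → j ≤ k → h j ≤ h k)
    (hsum : Summable fun j : ℕ => 1 / h (n + j))
    (r : ℕ → Ω → ℝ) (hmeas : ∀ j, Measurable (r j))
    (hindep : iIndepFun
      (fun j : {j : ℕ // n ≤ j} => r j) P)
    (hexp : ∀ j, n ≤ j → IsExponentialRV P (r j) (h j))
    (R : Ω → ℝ) (hR : ∀ ω, R ω = ∑' j : ℕ, r (n + j) ω)
    (Z : ℝ) (hZ : Z = ∑' j : ℕ, 1 / h (n + j) ^ 2)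
    (hZh : 1 / Real.sqrt Z ≤ h n / 2) :
    ∀ t : ℝ, 0 < t →
      P {ω | (∫ ω', R ω' ∂P) + t * Real.sqrt Z < R ω} ≤ ENNReal.ofReal (Real.exp (2 - t)) ∧
      P {ω | R ω < (∫ ω', R ω' ∂P) - t * Real.sqrt Z} ≤ ENNReal.ofReal (Real.exp (2 - t)) := by
  intro t ht
  -- notation
  set μ : ℕ → ℝ := fun j => 1 / h (n + j) with hμdef
  have hl : ∀ j : ℕ, 0 < h (n + j) := fun j => hh _ (Nat.le_add_right n j)
  have hμpos : ∀ j, 0 < μ j := fun j => one_div_pos.mpr (hl j)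
  have hμle : ∀ j, μ j ≤ μ 0 := by
    intro j
    apply one_div_le_one_div_of_le (by simpa using hh n le_rfl)
    simpa using hmono n (n + j) le_rfl (Nat.le_add_right n j)
  have hsμ2 : Summable (fun j => μ j ^ 2) := by
    refine Summable.of_nonneg_of_le (fun j => sq_nonneg _) (fun j => ?_) (hsum.mul_left (μ 0))
    calc μ j ^ 2 = μ j * μ j := sq (μ j) ▸ by ring
    _ ≤ μ 0 * μ j := by
        have := hμpos j
        nlinarith [hμle j]
  have hZ' : Z = ∑' j, μ j ^ 2 := by
    rw [hZ]
    congr 1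
    funext j
    rw [hμdef, div_pow, one_pow]
  have hZpos : 0 < Z := by
    rw [hZ']
    exact Summable.tsum_pos hsμ2 (fun i => sq_nonneg _) 0 (pow_pos (hμpos 0) 2)
  have hsqrtZ : 0 < Real.sqrt Z := Real.sqrt_pos.mpr hZpos
  set s : ℝ := 1 / Real.sqrt Z with hsdef
  have hspos : 0 < s := by positivity
  have hsZ1 : s * Real.sqrt Z = 1 := one_div_mul_cancel hsqrtZ.ne'
  have hs_sq : s ^ 2 * Z = 1 := by
    rw [hsdef, div_pow, one_pow, Real.sq_sqrt hZpos.le, one_div_mul_cancel hZpos.ne']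
  have hs_le : ∀ j, s ≤ h (n + j) / 2 := by
    intro j
    refine hZh.trans ?_
    have := hmono n (n + j) le_rfl (Nat.le_add_right n j)
    linarith
  have hs_lt : ∀ j, s < h (n + j) := fun j => lt_of_le_of_lt (hs_le j) (by linarith [hl j])
  set M : ℝ := ∑' j, μ j with hMdef
  -- the exponential law of each r (n+j)
  have hlaw : ∀ j : ℕ, Measure.map (r (n + j)) P = expMeasure (h (n + j)) :=
    fun j => hexp (n + j) (Nat.le_add_right n j)
  -- ae nonneg
  have hae_nonneg : ∀ j : ℕ, ∀ᵐ ω ∂P, 0 ≤ r (n + j) ω := by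
    intro j
    rw [ae_iff]
    have : {ω | ¬ 0 ≤ r (n + j) ω} = r (n + j) ⁻¹' (Iio 0) := by
      ext ω; simp [not_le]
    rw [this, ← Measure.map_apply (hmeas _) measurableSet_Iio, hlaw j, expMeasure_Iio_zero]
  -- lintegral of exp moments
  have hlint : ∀ (u : ℝ) (j : ℕ), u < h (n + j) →
      ∫⁻ ω, ENNReal.ofReal (Real.exp (u * r (n + j) ω)) ∂P
        = ENNReal.ofReal (h (n + j) / (h (n + j) - u)) := by
    intro u j hu
    have hmg : Measurable fun x : ℝ => ENNReal.ofReal (Real.exp (u * x)) :=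
      (Real.measurable_exp.comp (measurable_const_mul u)).ennreal_ofReal
    rw [← lintegral_map hmg (hmeas (n + j)), hlaw j, (lintegral_exp_expMeasure (hl j) hu).1]
  have hintexp : ∀ (u : ℝ) (j : ℕ), u < h (n + j) →
      Integrable (fun ω => Real.exp (u * r (n + j) ω)) P := by
    intro u j hu
    refine ⟨((Real.measurable_exp.comp (measurable_const_mul u)).comp
      (hmeas (n + j))).aestronglyMeasurable, ?_⟩
    rw [hasFiniteIntegral_iff_ofReal (ae_of_all _ fun ω => (Real.exp_pos _).le), hlint u j hu]
    exact ENNReal.ofReal_lt_top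
  have hmgf : ∀ (u : ℝ) (j : ℕ), u < h (n + j) →
      mgf (r (n + j)) P u = h (n + j) / (h (n + j) - u) := by
    intro u j hu
    rw [mgf, integral_eq_lintegral_of_nonneg_ae (ae_of_all _ fun ω => (Real.exp_pos _).le)
      (hintexp u j hu).1, hlint u j hu, ENNReal.toReal_ofReal]
    have h1 := hl j
    have h2 : 0 < h (n + j) - u := by linarith
    positivity
  have hmgf_le : ∀ (u : ℝ) (j : ℕ), -h (n + j) < u → u ≤ h (n + j) / 2 →
      mgf (r (n + j)) P u ≤ Real.exp (u * μ j + 2 * u ^ 2 * μ j ^ 2) := by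
    intro u j hu1 hu2
    rw [hmgf u j (lt_of_le_of_lt hu2 (by linarith [hl j, hspos, hs_lt j]))]
    exact rate_div_le_exp (hl j) hu1 hu2
  -- partial sums
  set S : ℕ → Ω → ℝ := fun m ω => ∑ j ∈ Finset.range m, r (n + j) ω with hSdef
  have hSmeas : ∀ m, Measurable (S m) := fun m => Finset.measurable_sum _ (fun j _ => hmeas _)
  -- reindexing
  set e : ℕ → {j : ℕ // n ≤ j} := fun j => ⟨n + j, Nat.le_add_right n j⟩ with hedef
  have he_inj : Function.Injective e := by
    intro a b hab
    have : n + a = n + b := congrArg Subtype.val hab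
    omega
  have hSfun : ∀ m : ℕ, (∑ i ∈ (Finset.range m).image e, r ↑i) = S m := by
    intro m
    funext ω
    rw [Finset.sum_apply, Finset.sum_image (fun a _ b _ hab => he_inj hab)]
  have hmgfS : ∀ (u : ℝ) (m : ℕ), mgf (S m) P u = ∏ j ∈ Finset.range m, mgf (r (n + j)) P u := by
    intro u m
    have := hindep.mgf_sum (fun i => hmeas i.val) ((Finset.range m).image e) (t := u)
    rw [hSfun m] at this
    rw [this, Finset.prod_image (fun a _ b _ hab => he_inj hab)]
  have hintS : ∀ (u : ℝ) (m : ℕ), (∀ j, u < h (n + j)) → Integrable (fun ω => Real.exp (u * S m ω)) P := by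
    intro u m hu
    have := hindep.integrable_exp_mul_sum (fun i => hmeas i.val)
      (s := (Finset.range m).image e) (t := u) ?_
    · rw [hSfun m] at this
      exact this
    · rintro ⟨i, hi⟩ -
      obtain ⟨k, rfl⟩ := Nat.exists_eq_add_of_le hi
      exact hintexp u k (hu k)
  -- bound on mgf of partial sums
  have hmgfS_le : ∀ (u : ℝ) (m : ℕ), (∀ j, -h (n + j) < u) → (∀ j, u ≤ h (n + j) / 2) →
      mgf (S m) P u ≤ Real.exp (u * (∑ j ∈ Finset.range m, μ j) + 2 * u ^ 2 * Z) := by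
    intro u m hu1 hu2
    rw [hmgfS u m]
    calc ∏ j ∈ Finset.range m, mgf (r (n + j)) P u
        ≤ ∏ j ∈ Finset.range m, Real.exp (u * μ j + 2 * u ^ 2 * μ j ^ 2) := by
          refine Finset.prod_le_prod (fun j _ => ?_) (fun j _ => hmgf_le u j (hu1 j) (hu2 j))
          rw [hmgf u j (lt_of_le_of_lt (hu2 j) (by linarith [hl j, hspos, hs_lt j]))]
          have h1 := hl j
          have h2 := hu2 j
          have : 0 < h (n + j) - u := by linarith
          positivity
      _ = Real.exp (∑ j ∈ Finset.range m, (u * μ j + 2 * u ^ 2 * μ j ^ 2)) :=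
          (Real.exp_sum _ _).symm
      _ ≤ Real.exp (u * (∑ j ∈ Finset.range m, μ j) + 2 * u ^ 2 * Z) := by
          apply Real.exp_le_exp.mpr
          rw [Finset.sum_add_distrib, ← Finset.mul_sum, ← Finset.mul_sum]
          have : (∑ j ∈ Finset.range m, μ j ^ 2) ≤ Z := by
            rw [hZ']
            exact Summable.sum_le_tsum _ (fun j _ => sq_nonneg _) hsμ2
          nlinarith [sq_nonneg u]
  -- integral identities
  have hlint_id : ∀ j, ∫⁻ ω, ENNReal.ofReal (r (n + j) ω) ∂P = ENNReal.ofReal (μ j) := by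
    intro j
    rw [← lintegral_map ENNReal.measurable_ofReal (hmeas (n + j)), hlaw j,
      lintegral_id_expMeasure (hl j)]
  have hnn_int : ∀ j, ∫⁻ ω, (‖r (n + j) ω‖₊ : ℝ≥0∞) ∂P = ENNReal.ofReal (μ j) := by
    intro j
    rw [← hlint_id j]
    apply lintegral_congr_ae
    filter_upwards [hae_nonneg j] with ω hω
    rw [← enorm_eq_nnnorm, ← ofReal_norm, Real.norm_of_nonneg hω]
  have hsum_nn : (∑' j, ∫⁻ ω, (‖r (n + j) ω‖₊ : ℝ≥0∞) ∂P) ≠ ⊤ := by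
    have : (∑' j, ∫⁻ ω, (‖r (n + j) ω‖₊ : ℝ≥0∞) ∂P) = ∑' j, ENNReal.ofReal (μ j) :=
      tsum_congr hnn_int
    rw [this, ← ENNReal.ofReal_tsum_of_nonneg (fun j => (hμpos j).le) hsum]
    exact ENNReal.ofReal_ne_top
  have hEr : ∀ j, ∫ ω, r (n + j) ω ∂P = μ j := by
    intro j
    rw [integral_eq_lintegral_of_nonneg_ae (hae_nonneg j) (hmeas _).aestronglyMeasurable,
      hlint_id j, ENNReal.toReal_ofReal (hμpos j).le]
  have hER : ∫ ω', R ω' ∂P = M := by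
    have h1 : ∫ ω', R ω' ∂P = ∫ ω', ∑' j, r (n + j) ω' ∂P :=
      integral_congr_ae (ae_of_all _ fun ω => hR ω)
    rw [h1, integral_tsum (fun j => (hmeas _).aestronglyMeasurable) hsum_nn, hMdef]
    exact tsum_congr hEr
  -- a.e. summability and convergence
  have hae_summ : ∀ᵐ ω ∂P, Summable (fun j => r (n + j) ω) ∧ ∀ j, 0 ≤ r (n + j) ω := by
    have hmeas_t : ∀ j : ℕ, Measurable fun ω => (‖r (n + j) ω‖₊ : ℝ≥0∞) :=
      fun j => (hmeas (n + j)).nnnorm.coe_nnreal_ennreal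
    have h1 : ∫⁻ ω, ∑' j, (‖r (n + j) ω‖₊ : ℝ≥0∞) ∂P ≠ ⊤ := by
      rw [lintegral_tsum (fun j => (hmeas_t j).aemeasurable)]
      exact hsum_nn
    have h2 := ae_lt_top (Measurable.ennreal_tsum hmeas_t) h1
    filter_upwards [h2, ae_all_iff.mpr hae_nonneg] with ω hω hω2
    refine ⟨?_, hω2⟩
    have h3 : Summable (fun j => ‖r (n + j) ω‖₊) := ENNReal.tsum_coe_ne_top_iff_summable.mp hω.ne
    exact Summable.of_nnnorm h3
  have hae_lim : ∀ᵐ ω ∂P, Tendsto (fun m => S m ω) atTop (𝓝 (R ω)) ∧ ∀ m, S m ω ≤ R ω := by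
    filter_upwards [hae_summ] with ω hω
    have hhs : HasSum (fun j => r (n + j) ω) (R ω) := by
      rw [hR ω]; exact hω.1.hasSum
    exact ⟨hhs.tendsto_sum_nat, fun m => by
      rw [hR ω]; exact Summable.sum_le_tsum (Finset.range m) (fun j _ => hω.2 j) hω.1⟩
  have hRae : AEMeasurable R P := by
    apply aemeasurable_of_tendsto_metrizable_ae' (fun m => (hSmeas m).aemeasurable)
    filter_upwards [hae_lim] with ω hω using hω.1
  have hSM : ∀ m, (∑ j ∈ Finset.range m, μ j) ≤ M :=
    fun m => Summable.sum_le_tsum _ (fun j _ => (hμpos j).le) hsum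
  -- upper tail
  have hboundU : ∀ m, ∫⁻ ω, ENNReal.ofReal (Real.exp (s * S m ω)) ∂P
      ≤ ENNReal.ofReal (Real.exp (s * M + 2)) := by
    intro m
    rw [← ofReal_integral_eq_lintegral_ofReal (hintS s m hs_lt)
      (ae_of_all _ fun ω => (Real.exp_pos _).le)]
    apply ENNReal.ofReal_le_ofReal
    have h1 := hmgfS_le s m (fun j => by linarith [hl j, hspos, hs_lt j]) hs_le
    refine le_trans (le_of_eq rfl) (h1.trans ?_)
    apply Real.exp_le_exp.mpr
    have h2 : s * (∑ j ∈ Finset.range m, μ j) ≤ s * M :=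
      mul_le_mul_of_nonneg_left (hSM m) hspos.le
    nlinarith [hs_sq]
  have hlintU : ∫⁻ ω, ENNReal.ofReal (Real.exp (s * R ω)) ∂P
      ≤ ENNReal.ofReal (Real.exp (s * M + 2)) := by
    have hconv : ∀ᵐ ω ∂P, Tendsto (fun m => ENNReal.ofReal (Real.exp (s * S m ω)))
        atTop (𝓝 (ENNReal.ofReal (Real.exp (s * R ω)))) := by
      filter_upwards [hae_lim] with ω hω
      exact ENNReal.tendsto_ofReal ((Real.continuous_exp.tendsto _).comp (hω.1.const_mul s))
    calc ∫⁻ ω, ENNReal.ofReal (Real.exp (s * R ω)) ∂P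
        = ∫⁻ ω, liminf (fun m => ENNReal.ofReal (Real.exp (s * S m ω))) atTop ∂P := by
          apply lintegral_congr_ae
          filter_upwards [hconv] with ω hω
          exact hω.liminf_eq.symm
      _ ≤ liminf (fun m => ∫⁻ ω, ENNReal.ofReal (Real.exp (s * S m ω)) ∂P) atTop :=
          lintegral_liminf_le
            (fun m => (Real.measurable_exp.comp ((hSmeas m).const_mul s)).ennreal_ofReal)
      _ ≤ ENNReal.ofReal (Real.exp (s * M + 2)) := by
          refine le_trans (Filter.liminf_le_liminf (Eventually.of_forall hboundU)) ?_
          simp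
  have hfmeasU : AEMeasurable (fun ω => ENNReal.ofReal (Real.exp (s * R ω))) P :=
    ENNReal.measurable_ofReal.comp_aemeasurable
      (Real.measurable_exp.comp_aemeasurable (hRae.const_mul s))
  -- lower tail
  have hboundL : ∀ m, ∫⁻ ω, ENNReal.ofReal (Real.exp (-s * R ω)) ∂P
      ≤ ENNReal.ofReal (Real.exp (-s * (∑ j ∈ Finset.range m, μ j) + 2)) := by
    intro m
    have hle : ∫⁻ ω, ENNReal.ofReal (Real.exp (-s * R ω)) ∂P
        ≤ ∫⁻ ω, ENNReal.ofReal (Real.exp (-s * S m ω)) ∂P := by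
      apply lintegral_mono_ae
      filter_upwards [hae_lim] with ω hω
      refine ENNReal.ofReal_le_ofReal (Real.exp_le_exp.mpr ?_)
      nlinarith [mul_nonneg hspos.le (sub_nonneg.mpr (hω.2 m))]
    refine hle.trans ?_
    rw [← ofReal_integral_eq_lintegral_ofReal (hintS (-s) m (fun j => by linarith [hl j, hspos, hs_lt j]))
      (ae_of_all _ fun ω => (Real.exp_pos _).le)]
    apply ENNReal.ofReal_le_ofReal
    have h1 := hmgfS_le (-s) m (fun j => by linarith [hl j, hspos, hs_lt j]) (fun j => by linarith [hl j, hspos, hs_lt j])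
    refine le_trans (le_of_eq rfl) (h1.trans ?_)
    apply Real.exp_le_exp.mpr
    nlinarith [hs_sq]
  have hlintL : ∫⁻ ω, ENNReal.ofReal (Real.exp (-s * R ω)) ∂P
      ≤ ENNReal.ofReal (Real.exp (-s * M + 2)) := by
    have htd : Tendsto (fun m => ENNReal.ofReal (Real.exp (-s * (∑ j ∈ Finset.range m, μ j) + 2)))
        atTop (𝓝 (ENNReal.ofReal (Real.exp (-s * M + 2)))) := by
      apply ENNReal.tendsto_ofReal
      refine (Real.continuous_exp.tendsto _).comp ?_
      exact (hsum.hasSum.tendsto_sum_nat.const_mul (-s)).add_const 2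
    exact ge_of_tendsto htd (Eventually.of_forall hboundL)
  have hfmeasL : AEMeasurable (fun ω => ENNReal.ofReal (Real.exp (-s * R ω))) P :=
    ENNReal.measurable_ofReal.comp_aemeasurable
      (Real.measurable_exp.comp_aemeasurable (hRae.const_mul (-s)))
  constructor
  · calc P {ω | (∫ ω', R ω' ∂P) + t * Real.sqrt Z < R ω}
        ≤ P {ω | ENNReal.ofReal (Real.exp (s * (M + t * Real.sqrt Z)))
            ≤ ENNReal.ofReal (Real.exp (s * R ω))} := by
          apply measure_mono
          intro ω hω
          simp only [mem_setOf_eq, hER] at hω ⊢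
          refine ENNReal.ofReal_le_ofReal (Real.exp_le_exp.mpr ?_)
          exact mul_le_mul_of_nonneg_left hω.le hspos.le
      _ ≤ (∫⁻ ω, ENNReal.ofReal (Real.exp (s * R ω)) ∂P)
            / ENNReal.ofReal (Real.exp (s * (M + t * Real.sqrt Z))) :=
          meas_ge_le_lintegral_div hfmeasU
            (ENNReal.ofReal_pos.mpr (Real.exp_pos _)).ne' ENNReal.ofReal_ne_top
      _ ≤ ENNReal.ofReal (Real.exp (s * M + 2))
            / ENNReal.ofReal (Real.exp (s * (M + t * Real.sqrt Z))) :=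
          ENNReal.div_le_div_right hlintU _
      _ = ENNReal.ofReal (Real.exp (2 - t)) := by
          rw [← ENNReal.ofReal_div_of_pos (Real.exp_pos _), ← Real.exp_sub]
          congr 1
          congr 1
          linear_combination (-t) * hsZ1
  · calc P {ω | R ω < (∫ ω', R ω' ∂P) - t * Real.sqrt Z}
        ≤ P {ω | ENNReal.ofReal (Real.exp (-s * (M - t * Real.sqrt Z)))
            ≤ ENNReal.ofReal (Real.exp (-s * R ω))} := by
          apply measure_mono
          intro ω hω
          simp only [mem_setOf_eq, hER] at hω ⊢
          refine ENNReal.ofReal_le_ofReal (Real.exp_le_exp.mpr ?_)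
          nlinarith [mul_nonneg hspos.le (sub_nonneg.mpr hω.le)]
      _ ≤ (∫⁻ ω, ENNReal.ofReal (Real.exp (-s * R ω)) ∂P)
            / ENNReal.ofReal (Real.exp (-s * (M - t * Real.sqrt Z))) :=
          meas_ge_le_lintegral_div hfmeasL
            (ENNReal.ofReal_pos.mpr (Real.exp_pos _)).ne' ENNReal.ofReal_ne_top
      _ ≤ ENNReal.ofReal (Real.exp (-s * M + 2))
            / ENNReal.ofReal (Real.exp (-s * (M - t * Real.sqrt Z))) :=
          ENNReal.div_le_div_right hlintL _
      _ = ENNReal.ofReal (Real.exp (2 - t)) := by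
          rw [← ENNReal.ofReal_div_of_pos (Real.exp_pos _), ← Real.exp_sub]
          congr 1
          congr 1
          linear_combination (-t) * hsZ1
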